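/- Fix κ ≥ 1, r = (r_1,…,r_κ) ∈ ℂ^κ with Re r_i > 0 for all i, real numbers s > 0, R > 1, 𝒦 ≥ 0, λ ∈ ℂ with Re λ ≥ 0, and integers 0 ≤ ℓ < j. For m ∈ ℤ₊^κ write |m| = m_1+…+m_κ and ⟨m,r⟩ = m_1 r_1+…+m_κ r_κ; for a complex polynomial C(t) = Σ_i a_i t^i set ‖C‖_R = Σ_i |a_i| R^i; for k ∈ ℤ₊^κ define Δ_k v = (λ+⟨k,r⟩)·v + dv/dt on ℂ[t]; let H^ℓ and H^0 be the sets of families η = (C_m)_{m ∈ ℤ₊^κ∖{0}} of polynomials with deg C_m ≤ 𝒦|m| and, respectively, ‖η‖_ℓ := Σ_m (|λ+⟨m,r⟩| + 𝒦|m|)^ℓ / |Γ(⟨m,r⟩/s)| · ‖C_m‖_R < ∞ and ‖η‖_0 := Σ_m ‖C_m‖_R / |Γ(⟨m,r⟩/s)| < ∞. Let l ∈ ℤ₊^κ∖{0} satisfy Re⟨l,r⟩ ≥ (j−ℓ)·s, and let a ∈ ℂ[t] with deg a ≤ 𝒦|l|. Then there exists Ã > 0 such that for every η = (C_m) ∈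 H^ℓ, the family (D_m)_{m ∈ ℤ₊^κ∖{0}} defined by D_m = a·(Δ_{m−l})^j C_{m−l} if m−l ∈ ℤ₊^κ∖{0} and D_m = 0 otherwise, belongs to H^0 and satisfies ‖(D_m)‖_0 ≤ Ã·‖η‖_ℓ. -/

import Mathlib

open scoped Classical

/-- The weighted `ℓ¹`-norm on complex polynomials. -/
noncomputable def normR (R : ℝ) (C : Polynomial ℂ) : ℝ :=
  ∑ i ∈ C.support, ‖C.coeff i‖ * R ^ i

/-- `|m| = m_1 + … + m_κ` for a multi-index `m`. -/
def msize {κ : ℕ} (m : Fin κ → ℕ) : ℕ := ∑ i, m i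

/-- `⟨m,r⟩ = m_1 r_1 + … + m_κ r_κ`. -/
noncomputable def mdot {κ : ℕ} (r : Fin κ → ℂ) (m : Fin κ → ℕ) : ℂ := ∑ i, (m i : ℂ) * r i

/-- The operator `Δ_k v = (λ+⟨k,r⟩)·v + dv/dt` on `ℂ[t]`. -/
noncomputable def DeltaOp {κ : ℕ} (lam : ℂ) (r : Fin κ → ℂ) (k : Fin κ → ℕ)
    (v : Polynomial ℂ) : Polynomial ℂ :=
  Polynomial.C (lam + mdot r k) * v + Polynomial.derivative v

/-- The Gamma-weighted norm `‖η‖_j`. -/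
noncomputable def normJ {κ : ℕ} (r : Fin κ → ℂ) (s R 𝒦 : ℝ) (lam : ℂ) (j : ℕ)
    (η : (Fin κ → ℕ) → Polynomial ℂ) : ℝ :=
  ∑' m : {m : Fin κ → ℕ // m ≠ 0},
    (‖lam + mdot r m.1‖ + 𝒦 * msize m.1) ^ j /
      ‖Complex.Gamma (mdot r m.1 / (s : ℂ))‖ * normR R (η m.1)

/-- Membership in the space `H^j`. -/
def memHJ {κ : ℕ} (r : Fin κ → ℂ) (s R 𝒦 : ℝ) (lam : ℂ) (j : ℕ)
    (η : (Fin κ → ℕ) → Polynomial ℂ) : Prop :=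
  η 0 = 0 ∧ (∀ m : Fin κ → ℕ, ((η m).natDegree : ℝ) ≤ 𝒦 * msize m) ∧
  Summable (fun m : {m : Fin κ → ℕ // m ≠ 0} =>
    (‖lam + mdot r m.1‖ + 𝒦 * msize m.1) ^ j /
      ‖Complex.Gamma (mdot r m.1 / (s : ℂ))‖ * normR R (η m.1))

open Polynomial

lemma normR_eq_sum {R : ℝ} {p : Polynomial ℂ} {S : Finset ℕ} (h : p.support ⊆ S) :
    normR R p = ∑ i ∈ S, ‖p.coeff i‖ * R ^ i := by
  refine Finset.sum_subset h fun i _ hi => ?_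
  simp [Polynomial.notMem_support_iff.mp hi]

lemma normR_nonneg {R : ℝ} (hR : 0 ≤ R) (p : Polynomial ℂ) : 0 ≤ normR R p :=
  Finset.sum_nonneg fun i _ => mul_nonneg (norm_nonneg _) (pow_nonneg hR _)

@[simp] lemma normR_zero (R : ℝ) : normR R 0 = 0 := by simp [normR]

lemma normR_add_le {R : ℝ} (hR : 0 ≤ R) (p q : Polynomial ℂ) :
    normR R (p + q) ≤ normR R p + normR R q := by
  rw [normR_eq_sum (p := p + q) (S := p.support ∪ q.support) (support_add),
    normR_eq_sum (p := p) (S := p.support ∪ q.support) Finset.subset_union_left,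
    normR_eq_sum (p := q) (S := p.support ∪ q.support) Finset.subset_union_right,
    ← Finset.sum_add_distrib]
  refine Finset.sum_le_sum fun i _ => ?_
  rw [← add_mul]
  exact mul_le_mul_of_nonneg_right (by simpa using norm_add_le _ _) (pow_nonneg hR _)

lemma normR_C_mul_le {R : ℝ} (c : ℂ) (p : Polynomial ℂ) :
    normR R (C c * p) ≤ ‖c‖ * normR R p := by
  have hsub : (C c * p).support ⊆ p.support := by
    intro i hi
    simp only [mem_support_iff, coeff_C_mul] at hi ⊢
    exact fun h => hi (by simp [h])
  rw [normR_eq_sum hsub, normR, Finset.mul_sum]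
  refine Finset.sum_le_sum fun i _ => ?_
  rw [coeff_C_mul, norm_mul, mul_assoc]

lemma normR_mul_X_pow {R : ℝ} (hR : 0 ≤ R) (n : ℕ) (p : Polynomial ℂ) :
    normR R (p * X ^ n) ≤ R ^ n * normR R p := by
  have hsub : (p * X ^ n).support ⊆ p.support.map ⟨fun i => i + n, add_left_injective n⟩ := by
    intro i hi
    simp only [mem_support_iff, coeff_mul_X_pow'] at hi
    by_cases hn : n ≤ i
    · simp only [hn, if_true] at hi
      simp only [Finset.mem_map, Function.Embedding.coeFn_mk, mem_support_iff]
      exact ⟨i - n, hi, Nat.sub_add_cancel hn⟩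
    · simp [hn] at hi
  rw [normR_eq_sum hsub, Finset.sum_map, normR, Finset.mul_sum]
  refine Finset.sum_le_sum fun i _ => ?_
  simp only [Function.Embedding.coeFn_mk, coeff_mul_X_pow', le_add_iff_nonneg_left,
    Nat.zero_le, if_true, Nat.add_sub_cancel]
  rw [pow_add]
  ring_nf
  exact le_refl _

lemma normR_mul_le {R : ℝ} (hR : 0 ≤ R) (p q : Polynomial ℂ) :
    normR R (p * q) ≤ normR R p * normR R q := by
  conv_lhs => rw [p.as_sum_support, Finset.sum_mul]
  have hsum : ∀ (s : Finset ℕ) (f : ℕ → Polynomial ℂ),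
      normR R (∑ i ∈ s, f i) ≤ ∑ i ∈ s, normR R (f i) := by
    intro s f
    induction s using Finset.induction_on with
    | empty => simp
    | insert _ _ hx ih =>
      rw [Finset.sum_insert hx, Finset.sum_insert hx]
      exact (normR_add_le hR _ _).trans (by linarith)
  refine (hsum _ _).trans ?_
  rw [normR, Finset.sum_mul]
  refine Finset.sum_le_sum fun i _ => ?_
  rw [← C_mul_X_pow_eq_monomial, mul_assoc, mul_comm (X ^ i) q, ← mul_assoc]
  calc normR R (C (p.coeff i) * q * X ^ i) ≤ R ^ i * normR R (C (p.coeff i) * q) :=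
        normR_mul_X_pow hR i _
    _ ≤ R ^ i * (‖p.coeff i‖ * normR R q) := by
        exact mul_le_mul_of_nonneg_left (normR_C_mul_le _ _) (pow_nonneg hR _)
    _ = ‖p.coeff i‖ * R ^ i * normR R q := by ring

lemma normR_derivative_le {R : ℝ} (hR : 1 ≤ R) (p : Polynomial ℂ) :
    normR R (derivative p) ≤ p.natDegree * normR R p := by
  have hR0 : 0 ≤ R := le_trans zero_le_one hR
  have hsub : (derivative p).support ⊆ Finset.range p.natDegree := by
    intro i hi
    simp only [mem_support_iff, coeff_derivative] at hi
    have : p.coeff (i + 1) ≠ 0 := fun h => hi (by simp [h])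
    have := le_natDegree_of_ne_zero this
    simp only [Finset.mem_range]; omega
  rw [normR_eq_sum hsub]
  calc ∑ i ∈ Finset.range p.natDegree, ‖(derivative p).coeff i‖ * R ^ i
      ≤ ∑ i ∈ Finset.range p.natDegree,
        (p.natDegree : ℝ) * (‖p.coeff (i + 1)‖ * R ^ (i + 1)) := by
        refine Finset.sum_le_sum fun i hi => ?_
        rw [coeff_derivative, norm_mul]
        have h1 : ‖(i : ℂ) + 1‖ = (i + 1 : ℝ) := by
          rw [show ((i : ℂ) + 1) = (((i + 1 : ℕ) : ℝ) : ℂ) by push_cast; ring,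
            Complex.norm_real, Real.norm_eq_abs]
          rw [abs_of_nonneg (by positivity)]
          push_cast; ring
        have h2 : (i + 1 : ℝ) ≤ (p.natDegree : ℝ) := by
          have := Finset.mem_range.mp hi; exact_mod_cast this
        have h3 : R ^ i ≤ R ^ (i + 1) := pow_le_pow_right₀ hR (by omega)
        calc ‖p.coeff (i + 1)‖ * ‖(i : ℂ) + 1‖ * R ^ i
            ≤ ‖p.coeff (i + 1)‖ * (p.natDegree : ℝ) * R ^ (i + 1) := by
              apply mul_le_mul (mul_le_mul_of_nonneg_left (h1 ▸ h2) (norm_nonneg _)) h3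
                (pow_nonneg hR0 _)
              positivity
          _ = (p.natDegree : ℝ) * (‖p.coeff (i + 1)‖ * R ^ (i + 1)) := by ring
    _ = (p.natDegree : ℝ) * ∑ i ∈ Finset.range p.natDegree,
          ‖p.coeff (i + 1)‖ * R ^ (i + 1) := by rw [Finset.mul_sum]
    _ ≤ (p.natDegree : ℝ) * normR R p := by
        refine mul_le_mul_of_nonneg_left ?_ (by positivity)
        rw [normR_eq_sum (S := Finset.range (p.natDegree + 1)) supp_subset_range_natDegree_succ]
        rw [show Finset.range (p.natDegree + 1) = insert 0 ((Finset.range p.natDegree).map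
          ⟨Nat.succ, Nat.succ_injective⟩) from ?_]
        · rw [Finset.sum_insert (by simp), Finset.sum_map]
          simp only [Function.Embedding.coeFn_mk]
          refine le_add_of_nonneg_of_le (by positivity) (le_of_eq ?_)
          rfl
        · ext i
          simp only [Finset.mem_insert, Finset.mem_map, Finset.mem_range,
            Function.Embedding.coeFn_mk, Finset.mem_range]
          cases i with
          | zero => simp
          | succ n => simpa [Nat.succ_eq_add_one] using by omega

lemma deltaOp_natDegree_le {κ : ℕ} (lam : ℂ) (r : Fin κ → ℂ) (k : Fin κ → ℕ)
    (v : Polynomial ℂ) : (DeltaOp lam r k v).natDegree ≤ v.natDegree := by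
  refine (natDegree_add_le _ _).trans (max_le (natDegree_C_mul_le _ _) ?_)
  exact (natDegree_derivative_le v).trans (Nat.sub_le _ _)

lemma deltaOp_iterate_natDegree_le {κ : ℕ} (lam : ℂ) (r : Fin κ → ℂ) (k : Fin κ → ℕ)
    (j : ℕ) (v : Polynomial ℂ) :
    ((DeltaOp lam r k)^[j] v).natDegree ≤ v.natDegree := by
  induction j with
  | zero => simp
  | succ n ih =>
    rw [Function.iterate_succ_apply']
    exact (deltaOp_natDegree_le _ _ _ _).trans ih

lemma deltaOp_normR_le {κ : ℕ} {R : ℝ} (hR : 1 ≤ R) (lam : ℂ) (r : Fin κ → ℂ)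
    (k : Fin κ → ℕ) {N : ℝ} (v : Polynomial ℂ) (hN : (v.natDegree : ℝ) ≤ N) :
    normR R (DeltaOp lam r k v) ≤ (‖lam + mdot r k‖ + N) * normR R v := by
  have hR0 : (0:ℝ) ≤ R := le_trans zero_le_one hR
  refine (normR_add_le hR0 _ _).trans ?_
  have h1 := normR_C_mul_le (R := R) (lam + mdot r k) v
  have h2 := (normR_derivative_le hR v).trans
    (mul_le_mul_of_nonneg_right hN (normR_nonneg hR0 v))
  rw [add_mul]; exact add_le_add h1 h2

lemma deltaOp_iterate_normR_le {κ : ℕ} {R : ℝ} (hR : 1 ≤ R) (lam : ℂ) (r : Fin κ → ℂ)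
    (k : Fin κ → ℕ) {N : ℝ} (j : ℕ) (v : Polynomial ℂ) (hN : (v.natDegree : ℝ) ≤ N) :
    normR R ((DeltaOp lam r k)^[j] v) ≤ (‖lam + mdot r k‖ + N) ^ j * normR R v := by
  have hR0 : (0:ℝ) ≤ R := le_trans zero_le_one hR
  have hN0 : (0:ℝ) ≤ N := le_trans (by positivity) hN
  induction j with
  | zero => simp
  | succ n ih =>
    rw [Function.iterate_succ_apply']
    have hd : (((DeltaOp lam r k)^[n] v).natDegree : ℝ) ≤ N :=
      le_trans (by exact_mod_cast deltaOp_iterate_natDegree_le lam r k n v) hN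
    calc normR R (DeltaOp lam r k ((DeltaOp lam r k)^[n] v))
        ≤ (‖lam + mdot r k‖ + N) * normR R ((DeltaOp lam r k)^[n] v) :=
          deltaOp_normR_le hR lam r k _ hd
      _ ≤ (‖lam + mdot r k‖ + N) * ((‖lam + mdot r k‖ + N) ^ n * normR R v) := by
          exact mul_le_mul_of_nonneg_left ih (by positivity)
      _ = (‖lam + mdot r k‖ + N) ^ (n + 1) * normR R v := by ring

section
open MeasureTheory intervalIntegral
lemma gamma_prod (x : ℝ) (hx : 0 < x) (d : ℕ) :
    x ^ d * Real.Gamma x ≤ Real.Gamma (x + d) := by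
  induction d with
  | zero => simp
  | succ n ih =>
    have hxn : (0:ℝ) < x + n := by positivity
    have heq : Real.Gamma (x + ((n:ℝ) + 1)) = (x + n) * Real.Gamma (x + n) := by
      rw [show x + ((n:ℝ) + 1) = (x + n) + 1 by ring, Real.Gamma_add_one (ne_of_gt hxn)]
    push_cast
    rw [heq]
    calc x ^ (n + 1) * Real.Gamma x = x * (x ^ n * Real.Gamma x) := by ring
      _ ≤ x * Real.Gamma (x + n) := mul_le_mul_of_nonneg_left ih hx.le
      _ ≤ (x + n) * Real.Gamma (x + n) := by
          exact mul_le_mul_of_nonneg_right (by linarith [Nat.cast_nonneg (α := ℝ) n])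
            (Real.Gamma_pos_of_pos hxn).le

lemma beta_bound {z w : ℂ} (hz : 0 < z.re) {d : ℕ} (hd : 1 ≤ d) (hw : (d : ℝ) ≤ w.re) :
    z.re ^ d * ‖Complex.betaIntegral z w‖ ≤ Real.Gamma d := by
  set x := z.re with hx
  have hd1 : (1:ℝ) ≤ (d:ℝ) := by exact_mod_cast hd
  have hw0 : 0 < w.re := lt_of_lt_of_le (by linarith) hw
  set g : ℝ → ℝ := fun t => t ^ (x - 1) * (1 - t) ^ ((d:ℝ) - 1) with hg
  -- the complex integrand at real parameters
  set F : ℝ → ℂ := fun t => (t:ℂ) ^ ((x:ℂ) - 1) * (1 - (t:ℂ)) ^ (((d:ℝ):ℂ) - 1) with hF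
  have hFg : ∀ t ∈ Set.Icc (0:ℝ) 1, F t = ((g t : ℝ) : ℂ) := by
    intro t ht
    have h0t : (0:ℝ) ≤ t := ht.1
    have ht1 : (0:ℝ) ≤ 1 - t := by linarith [ht.2]
    simp only [hF, hg]
    rw [show (1 - (t:ℂ)) = ((1 - t : ℝ) : ℂ) by push_cast; ring,
      show ((x:ℂ) - 1) = ((x - 1 : ℝ) : ℂ) by push_cast; ring,
      show (((d:ℝ):ℂ) - 1) = (((d:ℝ) - 1 : ℝ) : ℂ) by push_cast; ring,
      ← Complex.ofReal_cpow h0t, ← Complex.ofReal_cpow ht1]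
    push_cast
    ring
  have hg_nonneg : ∀ t ∈ Set.Icc (0:ℝ) 1, 0 ≤ g t := by
    intro t ht
    exact mul_nonneg (Real.rpow_nonneg ht.1 _) (Real.rpow_nonneg (by linarith [ht.2]) _)
  -- integrability of g
  have hFint : IntervalIntegrable F volume 0 1 := by
    have := Complex.betaIntegral_convergent (u := (x:ℂ)) (v := ((d:ℝ):ℂ))
      (by simpa using hz) (by simpa using (by linarith : (0:ℝ) < (d:ℝ)))
    exact this
  have hgint : IntervalIntegrable g volume 0 1 := by
    refine hFint.norm.congr ?_
    intro t ht
    rw [Set.uIoc_of_le zero_le_one] at ht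
    have htIcc : t ∈ Set.Icc (0:ℝ) 1 := ⟨ht.1.le, ht.2⟩
    show ‖F t‖ = g t
    rw [hFg t htIcc, Complex.norm_real, Real.norm_eq_abs, abs_of_nonneg (hg_nonneg t htIcc)]
  -- bound the complex beta integral by the real integral of g
  have h1 : ∀ᵐ (t : ℝ), t ≠ 1 := by
    refine MeasureTheory.mem_ae_iff.mpr ?_
    have hset : {t : ℝ | t ≠ 1}ᶜ = {1} := by ext t; simp
    rw [hset]
    exact measure_singleton 1
  have habs : ‖Complex.betaIntegral z w‖ ≤ ∫ t in (0:ℝ)..1, g t := by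
    rw [Complex.betaIntegral]
    have hbd : ∀ᵐ (t : ℝ) ∂(volume.restrict (Set.uIoc (0:ℝ) 1)),
        ‖(t:ℂ) ^ (z - 1) * (1 - (t:ℂ)) ^ (w - 1)‖ ≤ g t := by
      filter_upwards [ae_restrict_of_ae h1, ae_restrict_mem measurableSet_uIoc] with t ht1 ht2
      rw [Set.uIoc_of_le zero_le_one] at ht2
      have ht0 : 0 < t := ht2.1
      have htlt : t < 1 := lt_of_le_of_ne ht2.2 ht1
      have h1t : 0 < 1 - t := by linarith
      rw [norm_mul,
        Complex.norm_cpow_eq_rpow_re_of_pos ht0,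
        show (1 - (t:ℂ)) = ((1 - t : ℝ) : ℂ) by push_cast; ring,
        Complex.norm_cpow_eq_rpow_re_of_pos h1t]
      simp only [Complex.sub_re, Complex.one_re]
      refine mul_le_mul_of_nonneg_left ?_ (Real.rpow_nonneg ht0.le _)
      exact Real.rpow_le_rpow_of_exponent_ge h1t (by linarith) (by linarith)
    rw [Set.uIoc_of_le zero_le_one] at hbd
    exact intervalIntegral.norm_integral_le_of_norm_le zero_le_one
      ((ae_restrict_iff' measurableSet_Ioc).1 hbd) hgint
  -- the real integral of g equals the Gamma quotient
  have hbetaF : Complex.betaIntegral (x:ℂ) ((d:ℝ):ℂ) = ((∫ t in (0:ℝ)..1, g t : ℝ) : ℂ) := by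
    rw [Complex.betaIntegral]
    have hcongr : ∫ t in (0:ℝ)..1, (t:ℂ) ^ ((x:ℂ) - 1) * (1 - (t:ℂ)) ^ (((d:ℝ):ℂ) - 1)
        = ∫ t in (0:ℝ)..1, ((g t : ℝ) : ℂ) := by
      refine intervalIntegral.integral_congr fun t ht => ?_
      rw [Set.uIcc_of_le zero_le_one] at ht
      exact hFg t ht
    rw [hcongr]
    exact_mod_cast RCLike.intervalIntegral_ofReal (𝕜 := ℂ) (f := g) (μ := volume) (a := 0) (b := 1)
  have hI : Real.Gamma x * Real.Gamma d = Real.Gamma (x + d) * ∫ t in (0:ℝ)..1, g t := by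
    have := Complex.Gamma_mul_Gamma_eq_betaIntegral (s := (x:ℂ)) (t := ((d:ℝ):ℂ))
      (by simpa using hz) (by simpa using (by linarith : (0:ℝ) < (d:ℝ)))
    rw [hbetaF, show ((x:ℂ) + ((d:ℝ):ℂ)) = (((x + d : ℝ)):ℂ) by push_cast; ring,
      Complex.Gamma_ofReal, Complex.Gamma_ofReal, Complex.Gamma_ofReal] at this
    exact_mod_cast this
  -- assemble
  have hxd_pos : (0:ℝ) < x + d := by positivity
  have hpos : 0 < Real.Gamma (x + d) := Real.Gamma_pos_of_pos hxd_pos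
  have hgd : 0 ≤ Real.Gamma d := (Real.Gamma_pos_of_pos (by linarith)).le
  have step1 : x ^ d * ‖Complex.betaIntegral z w‖ ≤ x ^ d * ∫ t in (0:ℝ)..1, g t :=
    mul_le_mul_of_nonneg_left habs (by positivity)
  refine step1.trans ?_
  rw [← mul_le_mul_iff_of_pos_right hpos]
  calc (x ^ d * ∫ t in (0:ℝ)..1, g t) * Real.Gamma (x + d)
      = x ^ d * (Real.Gamma (x + d) * ∫ t in (0:ℝ)..1, g t) := by ring
    _ = x ^ d * (Real.Gamma x * Real.Gamma d) := by rw [← hI]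
    _ = (x ^ d * Real.Gamma x) * Real.Gamma d := by ring
    _ ≤ Real.Gamma (x + d) * Real.Gamma d := mul_le_mul_of_nonneg_right (gamma_prod x hz d) hgd
    _ = Real.Gamma d * Real.Gamma (x + d) := by ring

end

set_option maxHeartbeats 4000000
/-- Lemma 5: if `Re⟨l,r⟩ ≥ (j−ℓ)s` and `deg a ≤ 𝒦|l|`, then the linear operator
`a(t)·x^l·(λ+δ̂)^j`, sending the family `(C_m)` to the family
`m ↦ a·Δ_{m−l}^j C_{m−l}` (and `0` where `m−l ∉ ℤ₊^κ∖{0}`), is continuous from `H^ℓ`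
to `H^0`. -/
theorem monomial_euler_operator_continuous (κ : ℕ) (hκ : 1 ≤ κ) (r : Fin κ → ℂ)
    (hr : ∀ i, 0 < (r i).re) (s R 𝒦 : ℝ) (hs : 0 < s) (hR : 1 < R) (h𝒦 : 0 ≤ 𝒦)
    (lam : ℂ) (hlam : 0 ≤ lam.re) (ℓ j : ℕ) (hℓj : ℓ < j)
    (l : Fin κ → ℕ) (hl : l ≠ 0) (hlr : ((j : ℝ) - ℓ) * s ≤ (mdot r l).re)
    (a : Polynomial ℂ) (ha : (a.natDegree : ℝ) ≤ 𝒦 * msize l) :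
    ∃ A0 > (0 : ℝ), ∀ η : (Fin κ → ℕ) → Polynomial ℂ, memHJ r s R 𝒦 lam ℓ η →
      memHJ r s R 𝒦 lam 0
        (fun m => if l ≤ m ∧ m ≠ l then a * (DeltaOp lam r (m - l))^[j] (η (m - l)) else 0) ∧
      normJ r s R 𝒦 lam 0
        (fun m => if l ≤ m ∧ m ≠ l then a * (DeltaOp lam r (m - l))^[j] (η (m - l)) else 0) ≤
        A0 * normJ r s R 𝒦 lam ℓ η := by
  have hR0 : (0:ℝ) ≤ R := by linarith
  have hR1 : (1:ℝ) ≤ R := hR.le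
  -- basic constants
  have hne : (Finset.univ : Finset (Fin κ)).Nonempty := ⟨⟨0, hκ⟩, Finset.mem_univ _⟩
  set ρ : ℝ := Finset.univ.inf' hne (fun i => (r i).re) with hρdef
  have hρ : 0 < ρ := (Finset.lt_inf'_iff hne).mpr fun i _ => hr i
  set Mr : ℝ := Finset.univ.sup' hne (fun i => ‖r i‖) with hMrdef
  have hMr : 0 ≤ Mr :=
    le_trans (norm_nonneg (r ⟨0, hκ⟩))
      (Finset.le_sup' (fun i => ‖r i‖) (Finset.mem_univ ⟨0, hκ⟩))
  -- real part of mdot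
  have hre_eq : ∀ k : Fin κ → ℕ, (mdot r k).re = ∑ i, (k i : ℝ) * (r i).re := by
    intro k
    rw [mdot, Complex.re_sum]
    refine Finset.sum_congr rfl fun i _ => ?_
    rw [show ((k i : ℕ) : ℂ) = (((k i : ℕ) : ℝ) : ℂ) by push_cast; rfl, Complex.re_ofReal_mul]
  have hre_ge : ∀ k : Fin κ → ℕ, ρ * msize k ≤ (mdot r k).re := by
    intro k
    rw [hre_eq, msize]
    push_cast
    rw [Finset.mul_sum]
    refine Finset.sum_le_sum fun i _ => ?_
    rw [mul_comm]
    exact mul_le_mul_of_nonneg_left (Finset.inf'_le _ (Finset.mem_univ i)) (Nat.cast_nonneg _)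
  have habs_le : ∀ k : Fin κ → ℕ, ‖mdot r k‖ ≤ Mr * msize k := by
    intro k
    refine (norm_sum_le _ _).trans ?_
    rw [msize]
    push_cast
    rw [Finset.mul_sum]
    refine Finset.sum_le_sum fun i _ => ?_
    rw [norm_mul, Complex.norm_natCast, mul_comm (Mr)]
    exact mul_le_mul_of_nonneg_left
      (Finset.le_sup' (fun i => ‖r i‖) (Finset.mem_univ i)) (Nat.cast_nonneg _)
  have hmsize1 : ∀ k : Fin κ → ℕ, k ≠ 0 → 1 ≤ msize k := by
    intro k hk
    obtain ⟨i, hi⟩ := Function.ne_iff.mp hk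
    have : 1 ≤ k i := Nat.one_le_iff_ne_zero.mpr (by simpa using hi)
    exact le_trans this (Finset.single_le_sum (fun i _ => Nat.zero_le _) (Finset.mem_univ i))
  have hrepos : ∀ k : Fin κ → ℕ, k ≠ 0 → 0 < (mdot r k).re := by
    intro k hk
    have h1 : (1:ℝ) ≤ (msize k : ℝ) := by exact_mod_cast hmsize1 k hk
    nlinarith [hre_ge k]
  -- the exponent gap
  set d : ℕ := j - ℓ with hddef
  have hd1 : 1 ≤ d := by omega
  have hj_eq : j = ℓ + d := by omega
  have hdcast : (d : ℝ) = (j : ℝ) - (ℓ : ℝ) := by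
    rw [hddef]; push_cast [Nat.cast_sub hℓj.le]; ring
  -- the shift w
  set w : ℂ := mdot r l / (s : ℂ) with hwdef
  have hwre : w.re = (mdot r l).re / s := by rw [hwdef, Complex.div_ofReal_re]
  have hw_ge : (d : ℝ) ≤ w.re := by
    rw [hwre, hdcast, le_div_iff₀ hs]
    exact hlr
  have hwre0 : 0 < w.re := lt_of_lt_of_le (by exact_mod_cast hd1) hw_ge
  have hΓw : 0 < ‖Complex.Gamma w‖ :=
    norm_pos_iff.mpr (Complex.Gamma_ne_zero_of_re_pos hwre0)
  -- constant C₁ : bound for the weight W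
  set C₁ : ℝ := (‖lam‖ + Mr + 𝒦) / ρ with hC₁def
  have hWle : ∀ k : Fin κ → ℕ, k ≠ 0 →
      ‖lam + mdot r k‖ + 𝒦 * msize k ≤ C₁ * (mdot r k).re := by
    intro k hk
    have h1 : (1:ℝ) ≤ (msize k : ℝ) := by exact_mod_cast hmsize1 k hk
    have h2 : ‖lam + mdot r k‖ ≤ ‖lam‖ + Mr * msize k :=
      (norm_add_le _ _).trans (by linarith [habs_le k])
    have h3 : ‖lam + mdot r k‖ + 𝒦 * msize k
        ≤ (‖lam‖ + Mr + 𝒦) * msize k := by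
      have := norm_nonneg lam
      nlinarith
    refine h3.trans ?_
    rw [hC₁def, div_mul_eq_mul_div, le_div_iff₀ hρ]
    have := hre_ge k
    nlinarith [norm_nonneg lam]
  have hC₁0 : 0 ≤ C₁ := div_nonneg (by positivity) hρ.le
  have hΓd : 0 < Real.Gamma d := Real.Gamma_pos_of_pos (by exact_mod_cast hd1 : (0:ℝ) < (d:ℝ))
  set K : ℝ := (C₁ * s) ^ d * Real.Gamma d with hKdef
  have hK0 : 0 ≤ K := mul_nonneg (by positivity) hΓd.le
  -- additivity of mdot
  have hmdot_add : ∀ k : Fin κ → ℕ, mdot r (k + l) = mdot r k + mdot r l := by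
    intro k
    rw [mdot, mdot, mdot, ← Finset.sum_add_distrib]
    refine Finset.sum_congr rfl fun i _ => ?_
    have : ((k + l) i : ℂ) = (k i : ℂ) + (l i : ℂ) := by push_cast [Pi.add_apply]; ring
    rw [this]; ring
  -- beta key estimate
  have hkey : ∀ k : Fin κ → ℕ, k ≠ 0 →
      (‖lam + mdot r k‖ + 𝒦 * msize k) ^ d *
        ‖Complex.betaIntegral (mdot r k / (s : ℂ)) w‖ ≤ K := by
    intro k hk
    have hzre : (mdot r k / (s : ℂ)).re = (mdot r k).re / s := Complex.div_ofReal_re _ _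
    have hzre0 : 0 < (mdot r k / (s : ℂ)).re := by
      rw [hzre]; exact div_pos (hrepos k hk) hs
    have hW0 : 0 ≤ ‖lam + mdot r k‖ + 𝒦 * msize k := by positivity
    have h1 : ‖lam + mdot r k‖ + 𝒦 * msize k
        ≤ (C₁ * s) * (mdot r k / (s : ℂ)).re := by
      rw [hzre]
      refine (hWle k hk).trans (le_of_eq ?_)
      field_simp
    calc (‖lam + mdot r k‖ + 𝒦 * msize k) ^ d *
          ‖Complex.betaIntegral (mdot r k / (s : ℂ)) w‖
        ≤ ((C₁ * s) * (mdot r k / (s : ℂ)).re) ^ d *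
          ‖Complex.betaIntegral (mdot r k / (s : ℂ)) w‖ :=
          mul_le_mul_of_nonneg_right (pow_le_pow_left₀ hW0 h1 d) (norm_nonneg _)
      _ = (C₁ * s) ^ d * ((mdot r k / (s : ℂ)).re ^ d *
          ‖Complex.betaIntegral (mdot r k / (s : ℂ)) w‖) := by
          rw [mul_pow]; ring
      _ ≤ (C₁ * s) ^ d * Real.Gamma d := by
          exact mul_le_mul_of_nonneg_left (beta_bound hzre0 hd1 hw_ge) (by positivity)
  set A₁ : ℝ := normR R a / ‖Complex.Gamma w‖ * K with hA₁def
  have hA₁0 : 0 ≤ A₁ := mul_nonneg (div_nonneg (normR_nonneg hR0 a) hΓw.le) hK0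
  refine ⟨A₁ + 1, by linarith, fun η hη => ?_⟩
  obtain ⟨hη0, hηdeg, hηsum⟩ := hη
  set D : (Fin κ → ℕ) → Polynomial ℂ := fun m =>
    if l ≤ m ∧ m ≠ l then a * (DeltaOp lam r (m - l))^[j] (η (m - l)) else 0 with hDdef
  have hcond0 : ¬(l ≤ (0 : Fin κ → ℕ) ∧ (0 : Fin κ → ℕ) ≠ l) := by
    rintro ⟨h1, -⟩
    exact hl (funext fun i => Nat.le_zero.mp (h1 i))
  have hD0 : D 0 = 0 := if_neg hcond0
  have hmsize_add : ∀ m : Fin κ → ℕ, l ≤ m → msize (m - l) + msize l = msize m := by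
    intro m hm
    rw [msize, msize, msize, ← Finset.sum_add_distrib]
    exact Finset.sum_congr rfl fun i _ => Nat.sub_add_cancel (hm i)
  have hDdeg : ∀ m : Fin κ → ℕ, ((D m).natDegree : ℝ) ≤ 𝒦 * msize m := by
    intro m
    simp only [hDdef]
    by_cases hc : l ≤ m ∧ m ≠ l
    · rw [if_pos hc]
      have h1 := Polynomial.natDegree_mul_le (p := a)
        (q := (DeltaOp lam r (m - l))^[j] (η (m - l)))
      have h2 := deltaOp_iterate_natDegree_le lam r (m - l) j (η (m - l))
      have h4 : ((((DeltaOp lam r (m - l))^[j] (η (m - l))).natDegree : ℕ) : ℝ)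
          ≤ 𝒦 * msize (m - l) := le_trans (by exact_mod_cast h2) (hηdeg (m - l))
      calc ((a * (DeltaOp lam r (m - l))^[j] (η (m - l))).natDegree : ℝ)
          ≤ (a.natDegree : ℝ) +
            (((DeltaOp lam r (m - l))^[j] (η (m - l))).natDegree : ℝ) := by exact_mod_cast h1
        _ ≤ 𝒦 * msize l + 𝒦 * msize (m - l) := add_le_add ha h4
        _ = 𝒦 * ((msize (m - l) : ℝ) + (msize l : ℝ)) := by ring
        _ = 𝒦 * msize m := by
            rw [show ((msize (m - l) : ℝ) + (msize l : ℝ)) = ((msize (m - l) + msize l : ℕ) : ℝ)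
              by push_cast; ring, hmsize_add m hc.1]
    · rw [if_neg hc]
      simp only [Polynomial.natDegree_zero, Nat.cast_zero]
      positivity
  -- the injection k ↦ k + l
  have hel : ∀ k : Fin κ → ℕ, k + l ≠ 0 := by
    intro k h
    refine hl (funext fun i => ?_)
    have := congrFun h i
    simp only [Pi.add_apply, Pi.zero_apply] at this ⊢
    omega
  set e : {m : Fin κ → ℕ // m ≠ 0} → {m : Fin κ → ℕ // m ≠ 0} :=
    fun k => ⟨k.1 + l, hel k.1⟩ with hedef
  have he_inj : Function.Injective e := by
    intro k k' h
    refine Subtype.ext (funext fun i => ?_)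
    have h2 := congrFun (congrArg Subtype.val h) i
    simp only [hedef, Pi.add_apply] at h2
    omega
  have hsub_add : ∀ m : Fin κ → ℕ, l ≤ m → (m - l) + l = m :=
    fun m hm => funext fun i => Nat.sub_add_cancel (hm i)
  have hadd_sub : ∀ k : Fin κ → ℕ, (k + l) - l = k :=
    fun k => funext fun i => by simp only [Pi.sub_apply, Pi.add_apply]; omega
  have hrange : ∀ m : {m : Fin κ → ℕ // m ≠ 0}, m ∉ Set.range e → D m.1 = 0 := by
    intro m hm
    simp only [hDdef]
    rw [if_neg]
    rintro ⟨h1, h2⟩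
    apply hm
    have hk0 : m.1 - l ≠ 0 := by
      intro h0
      apply h2
      funext i
      have h3 := congrFun h0 i
      have h4 := h1 i
      simp only [Pi.sub_apply, Pi.zero_apply] at h3
      have h5 : m.1 i - l i = 0 := h3
      exact Nat.le_antisymm (Nat.sub_eq_zero_iff_le.mp h5) (h1 i)
    exact ⟨⟨m.1 - l, hk0⟩, Subtype.ext (hsub_add m.1 h1)⟩
  -- term functions
  set T0 : {m : Fin κ → ℕ // m ≠ 0} → ℝ := fun m =>
    (‖lam + mdot r m.1‖ + 𝒦 * msize m.1) ^ 0 /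
      ‖Complex.Gamma (mdot r m.1 / (s : ℂ))‖ * normR R (D m.1) with hT0def
  set Tl : {m : Fin κ → ℕ // m ≠ 0} → ℝ := fun m =>
    (‖lam + mdot r m.1‖ + 𝒦 * msize m.1) ^ ℓ /
      ‖Complex.Gamma (mdot r m.1 / (s : ℂ))‖ * normR R (η m.1) with hTldef
  have hTl_sum : Summable Tl := hηsum
  -- main per-term estimate
  have hterm : ∀ k : {m : Fin κ → ℕ // m ≠ 0}, T0 (e k) ≤ A₁ * Tl k := by
    rintro ⟨k, hk⟩
    simp only [hT0def, hTldef, hedef]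
    have hcond : l ≤ k + l ∧ k + l ≠ l := by
      constructor
      · intro i
        simp only [Pi.add_apply]
        omega
      · intro h
        refine hk (funext fun i => ?_)
        have := congrFun h i
        simp only [Pi.add_apply, Pi.zero_apply] at this ⊢
        omega
    have hDval : D (k + l) = a * (DeltaOp lam r k)^[j] (η k) := by
      simp only [hDdef]
      rw [if_pos hcond, hadd_sub k]
    rw [hDval, pow_zero]
    have hzre0 : 0 < (mdot r k / (s : ℂ)).re := by
      rw [Complex.div_ofReal_re]; exact div_pos (hrepos k hk) hs
    have hzw : mdot r (k + l) / (s : ℂ) = mdot r k / (s : ℂ) + w := by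
      rw [hmdot_add k, hwdef, add_div]
    rw [hzw]
    have hzwre : 0 < (mdot r k / (s : ℂ) + w).re := by
      rw [Complex.add_re]; linarith
    have hG : 0 < ‖Complex.Gamma (mdot r k / (s : ℂ) + w)‖ :=
      norm_pos_iff.mpr (Complex.Gamma_ne_zero_of_re_pos hzwre)
    have hg1 : 0 < ‖Complex.Gamma (mdot r k / (s : ℂ))‖ :=
      norm_pos_iff.mpr (Complex.Gamma_ne_zero_of_re_pos hzre0)
    have hid : ‖Complex.Gamma (mdot r k / (s : ℂ))‖ * ‖Complex.Gamma w‖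
        = ‖Complex.Gamma (mdot r k / (s : ℂ) + w)‖ *
          ‖Complex.betaIntegral (mdot r k / (s : ℂ)) w‖ := by
      rw [← norm_mul, ← norm_mul, Complex.Gamma_mul_Gamma_eq_betaIntegral hzre0 hwre0]
    have hW0 : 0 ≤ ‖lam + mdot r k‖ + 𝒦 * msize k := by positivity
    have hBv0 : 0 ≤ ‖Complex.betaIntegral (mdot r k / (s : ℂ)) w‖ :=
      norm_nonneg _
    have hkeyk := hkey k hk
    have hnorm : normR R (a * (DeltaOp lam r k)^[j] (η k)) ≤
        normR R a * ((‖lam + mdot r k‖ + 𝒦 * msize k) ^ j * normR R (η k)) :=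
      (normR_mul_le hR0 _ _).trans (mul_le_mul_of_nonneg_left
        (deltaOp_iterate_normR_le hR1 lam r k j (η k) (hηdeg k)) (normR_nonneg hR0 a))
    have hηk0 : 0 ≤ normR R (η k) := normR_nonneg hR0 (η k)
    have ha0 : 0 ≤ normR R a := normR_nonneg hR0 a
    have hGinv : 1 / ‖Complex.Gamma (mdot r k / (s : ℂ) + w)‖
        = ‖Complex.betaIntegral (mdot r k / (s : ℂ)) w‖ /
          (‖Complex.Gamma (mdot r k / (s : ℂ))‖ * ‖Complex.Gamma w‖) := by
      rw [div_eq_div_iff hG.ne' (mul_pos hg1 hΓw).ne', one_mul, hid]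
      ring
    calc 1 / ‖Complex.Gamma (mdot r k / (s : ℂ) + w)‖ *
          normR R (a * (DeltaOp lam r k)^[j] (η k))
        ≤ 1 / ‖Complex.Gamma (mdot r k / (s : ℂ) + w)‖ *
          (normR R a * ((‖lam + mdot r k‖ + 𝒦 * msize k) ^ j * normR R (η k))) :=
          mul_le_mul_of_nonneg_left hnorm (by positivity)
      _ = (normR R a * ((‖lam + mdot r k‖ + 𝒦 * msize k) ^ j * normR R (η k))) *
          (‖Complex.betaIntegral (mdot r k / (s : ℂ)) w‖ /
            (‖Complex.Gamma (mdot r k / (s : ℂ))‖ * ‖Complex.Gamma w‖)) := by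
          rw [mul_comm, hGinv]
      _ = (normR R a * ((‖lam + mdot r k‖ + 𝒦 * msize k) ^ d *
            ‖Complex.betaIntegral (mdot r k / (s : ℂ)) w‖) /
            ‖Complex.Gamma w‖) *
          ((‖lam + mdot r k‖ + 𝒦 * msize k) ^ ℓ /
            ‖Complex.Gamma (mdot r k / (s : ℂ))‖ * normR R (η k)) := by
          rw [hj_eq, pow_add]
          ring
      _ ≤ (normR R a * K / ‖Complex.Gamma w‖) *
          ((‖lam + mdot r k‖ + 𝒦 * msize k) ^ ℓ /
            ‖Complex.Gamma (mdot r k / (s : ℂ))‖ * normR R (η k)) := by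
          refine mul_le_mul_of_nonneg_right ?_ ?_
          · exact (div_le_div_iff_of_pos_right hΓw).mpr
              (mul_le_mul_of_nonneg_left hkeyk (normR_nonneg hR0 a))
          · exact mul_nonneg (div_nonneg (pow_nonneg hW0 _) hg1.le) hηk0
      _ = A₁ * ((‖lam + mdot r k‖ + 𝒦 * msize k) ^ ℓ /
            ‖Complex.Gamma (mdot r k / (s : ℂ))‖ * normR R (η k)) := by
          rw [hA₁def]
          ring
  -- summability and the tsum bound
  have hT0_nonneg : ∀ m, 0 ≤ T0 m := by
    intro m
    exact mul_nonneg (div_nonneg (pow_nonneg (by positivity) _) (norm_nonneg _))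
      (normR_nonneg hR0 _)
  have hT0supp : ∀ m ∉ Set.range e, T0 m = 0 := by
    intro m hm
    simp only [hT0def]
    rw [hrange m hm, normR_zero, mul_zero]
  have hcomp : Summable (T0 ∘ e) :=
    Summable.of_nonneg_of_le (fun k => hT0_nonneg _) (fun k => hterm k) (hTl_sum.mul_left A₁)
  have hT0sum : Summable T0 := (he_inj.summable_iff hT0supp).mp hcomp
  have hTl_nonneg : ∀ m, 0 ≤ Tl m := by
    intro m
    exact mul_nonneg (div_nonneg (pow_nonneg (by positivity) _) (norm_nonneg _))
      (normR_nonneg hR0 _)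
  have htsum : ∑' m, T0 m ≤ A₁ * ∑' m, Tl m := by
    rw [← he_inj.tsum_eq (f := T0) (fun m hm => by_contra fun h => hm (hT0supp m h) : Function.support T0 ⊆ Set.range e)]
    calc ∑' k, T0 (e k) ≤ ∑' k, A₁ * Tl k := Summable.tsum_le_tsum hterm hcomp (hTl_sum.mul_left A₁)
      _ = A₁ * ∑' k, Tl k := tsum_mul_left
  constructor
  · exact ⟨hD0, hDdeg, hT0sum⟩
  · have hnJ : normJ r s R 𝒦 lam 0 D = ∑' m, T0 m := rfl
    have hnJl : normJ r s R 𝒦 lam ℓ η = ∑' m, Tl m := rfl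
    calc normJ r s R 𝒦 lam 0 D ≤ A₁ * ∑' m, Tl m := by rw [hnJ]; exact htsum
      _ ≤ (A₁ + 1) * normJ r s R 𝒦 lam ℓ η := by
          rw [hnJl]
          have h0 : 0 ≤ ∑' m, Tl m := tsum_nonneg hTl_nonneg
          nlinarith
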